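/- Let R > 0, 0 < β < π, k > 0, and define μ(s) = √k · s sin β / √(R - s cos β + r(s)) with r(s) = √(R² + s² - 2sR cos β), all square roots principal. Then μ is analytic on the cut plane C_{R,β} = ℂ \ {R cos β + it : |t| ≥ R sin β}, and for real s > 0 it satisfies μ(s)² = k(s cos β - R + r(s)) and μ(s) > 0. -/

import Mathlib

open Complex

private lemma re_half_pos {z : ℂ} (hz : z ∈ Complex.slitPlane) :
    0 < (z ^ ((1:ℂ)/2)).re := by
  rw [one_div, Complex.cpow_inv_two_re]
  apply Real.sqrt_pos.mpr
  rcases Complex.mem_slitPlane_iff.mp hz with h | h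
  · have := Complex.re_le_norm z
    linarith
  · have h1 : (‖z‖)^2 = z.re^2 + z.im^2 := by
      rw [Complex.sq_norm, Complex.normSq_apply]; ring
    have h2 : 0 < z.im^2 := by positivity
    nlinarith [norm_nonneg z]

private lemma re_half_sq (z : ℂ) :
    ((z ^ ((1:ℂ)/2)).re)^2 = (‖z‖ + z.re)/2 := by
  rw [one_div, Complex.cpow_inv_two_re, Real.sq_sqrt]
  have h1 : |z.re| ≤ ‖z‖ := Complex.abs_re_le_norm z
  have h2 := neg_abs_le z.re
  linarith

private lemma half_sq {z : ℂ} (hz : z ≠ 0) : (z ^ ((1:ℂ)/2))^2 = z := by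
  rw [sq, ← Complex.cpow_add _ _ hz]; norm_num

private lemma ofReal_half {x : ℝ} (hx : 0 ≤ x) :
    ((x:ℂ)) ^ ((1:ℂ)/2) = (Real.sqrt x : ℂ) := by
  rw [Real.sqrt_eq_rpow, Complex.ofReal_cpow hx]; norm_num

/-- The cut plane `C_{R,β} = ℂ \ {R cos β + it : |t| ≥ R sin β}`. -/
def cutPlane (R β : ℝ) : Set ℂ :=
  {s : ℂ | ∀ t : ℝ, R * Real.sin β ≤ |t| → s ≠ (R * Real.cos β : ℂ) + t * Complex.I}

/-- `r(s) = √(R² + s² − 2sR cos β)`, principal branch. -/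
noncomputable def rfun (R β : ℝ) (s : ℂ) : ℂ :=
  ((R : ℂ) ^ 2 + s ^ 2 - 2 * s * R * Real.cos β) ^ ((1 : ℂ) / 2)

private lemma Qre (R β : ℝ) (s : ℂ) :
    ((R : ℂ) ^ 2 + s ^ 2 - 2 * s * R * Real.cos β).re
      = R^2 + s.re^2 - s.im^2 - 2*s.re*R*Real.cos β := by
  simp [pow_two, Complex.mul_re, Complex.mul_im, Complex.cos_ofReal_re]; ring

private lemma Qim (R β : ℝ) (s : ℂ) :
    ((R : ℂ) ^ 2 + s ^ 2 - 2 * s * R * Real.cos β).im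
      = 2*s.im*(s.re - R*Real.cos β) := by
  simp [pow_two, Complex.mul_re, Complex.mul_im, Complex.cos_ofReal_re]; ring

private lemma Qslit {R β : ℝ} (hR : 0 < R) (hβ0 : 0 < β) (hβπ : β < Real.pi)
    {s : ℂ} (hs : s ∈ cutPlane R β) :
    ((R : ℂ) ^ 2 + s ^ 2 - 2 * s * R * Real.cos β) ∈ Complex.slitPlane := by
  have hsn : 0 < Real.sin β := Real.sin_pos_of_pos_of_lt_pi hβ0 hβπ
  have pyth : Real.sin β ^ 2 + Real.cos β ^ 2 = 1 := Real.sin_sq_add_cos_sq β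
  rw [Complex.mem_slitPlane_iff]
  by_contra h
  push_neg at h
  obtain ⟨h1, h2⟩ := h
  rw [Qre] at h1
  rw [Qim] at h2
  have h2' : s.im = 0 ∨ s.re - R * Real.cos β = 0 := by
    rcases mul_eq_zero.mp h2 with h | h
    · left; rcases mul_eq_zero.mp h with h' | h'
      · norm_num at h'
      · exact h'
    · right; exact h
  rcases h2' with hv | hu
  · rw [hv] at h1
    nlinarith [sq_nonneg (s.re - R * Real.cos β), mul_pos (mul_pos hR hR) (mul_pos hsn hsn)]
  · have hu' : s.re = R * Real.cos β := by linarith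
    rw [hu'] at h1
    -- h1 : R^2 + (R c)^2 - v^2 - 2 R c R c ≤ 0  i.e.  R^2 sin^2 β ≤ v^2
    have hineq : R * Real.sin β ≤ |s.im| := by
      nlinarith [_root_.sq_abs s.im, abs_nonneg s.im, mul_pos hR hsn]
    exact hs s.im hineq (by
      apply Complex.ext <;>
        simp [hu', Complex.ofReal_mul, Complex.cos_ofReal_re])

private lemma Wre_pos {R β : ℝ} (hR : 0 < R) (hβ0 : 0 < β) (hβπ : β < Real.pi)
    {s : ℂ} (hs : s ∈ cutPlane R β) :
    0 < ((R : ℂ) - s * Real.cos β + rfun R β s).re := by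
  have hsn : 0 < Real.sin β := Real.sin_pos_of_pos_of_lt_pi hβ0 hβπ
  have pyth : Real.sin β ^ 2 + Real.cos β ^ 2 = 1 := Real.sin_sq_add_cos_sq β
  have hslit := Qslit hR hβ0 hβπ hs
  have hrpos : 0 < (rfun R β s).re := re_half_pos hslit
  have hWre : ((R : ℂ) - s * Real.cos β + rfun R β s).re
      = R - s.re * Real.cos β + (rfun R β s).re := by
    simp [Complex.mul_re, Complex.cos_ofReal_re]
  rw [hWre]
  set sn := Real.sin β with hsn'
  set c := Real.cos β with hc
  set u := s.re with hu
  rcases le_or_gt (u * c) R with hcu | hcu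
  · linarith
  · set Q : ℂ := (R : ℂ) ^ 2 + s ^ 2 - 2 * s * R * c with hQ
    have hrsq : ((rfun R β s).re)^2 = (‖Q‖ + Q.re)/2 := re_half_sq Q
    have pythC : (sn : ℂ)^2 + (c : ℂ)^2 = 1 := by exact_mod_cast pyth
    have hdec : Q = (s - (R*c : ℝ))^2 + ((R*sn : ℝ):ℂ)^2 := by
      rw [hQ]; push_cast
      linear_combination (-(R:ℂ)^2) * pythC
    have habs1 : ‖(s - (R*c : ℝ))^2‖ = (u - R*c)^2 + s.im^2 := by
      rw [norm_pow, Complex.sq_norm, Complex.normSq_apply]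
      simp
      ring
    have habs2 : ‖((R*sn : ℝ):ℂ)^2‖ = (R*sn)^2 := by
      rw [norm_pow, Complex.norm_real, Real.norm_eq_abs, _root_.sq_abs]
    have htri : (u - R*c)^2 + s.im^2 - (R*sn)^2 ≤ ‖Q‖ := by
      have h := norm_add_le Q (-(((R*sn : ℝ):ℂ)^2))
      have h2 : Q + -(((R*sn : ℝ):ℂ)^2) = (s - (R*c : ℝ))^2 := by
        rw [hdec]; ring
      rw [h2, habs1, norm_neg, habs2] at h
      linarith
    have hQre : Q.re = R^2 + u^2 - s.im^2 - 2*u*R*c := Qre R β s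
    have hR2 : R^2*sn^2 + R^2*c^2 = R^2 := by linear_combination R^2 * pyth
    have hge : (u - R*c)^2 ≤ ((rfun R β s).re)^2 := by
      rw [hrsq, hQre]; linarith [htri, hR2]
    have hu2 : R^2 < u^2 := by
      have hc2 : c^2 ≤ 1 := by nlinarith [Real.cos_le_one β, Real.neg_one_le_cos β]
      nlinarith [hcu, hR, sq_nonneg (u*c)]
    have key : (u - R*c)^2 - (u*c - R)^2 = sn^2*(u^2 - R^2) := by
      linear_combination (R^2 - u^2) * pyth
    have hlt : (u*c - R)^2 < (u - R*c)^2 := by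
      nlinarith [key, mul_pos (pow_pos hsn 2) (sub_pos.mpr hu2)]
    obtain ⟨rr, hrr⟩ : ∃ x, (rfun R β s).re = x := ⟨_, rfl⟩
    rw [hrr] at hge hrpos ⊢
    clear hrsq hWre hdec habs1 habs2 htri hQre hslit hrr hQ key hR2 pythC
    nlinarith [hge, hlt, hrpos, hcu]

/-- `μ(s) = √k · s sin β / √(R − s cos β + r(s))`, principal branches. -/
noncomputable def mufun (k R β : ℝ) (s : ℂ) : ℂ :=
  (Real.sqrt k : ℂ) * s * Real.sin β /
    (((R : ℂ) - s * Real.cos β + rfun R β s) ^ ((1 : ℂ) / 2))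

theorem mufun_analytic_and_positive (k R β : ℝ) (hk : 0 < k) (hR : 0 < R)
    (hβ0 : 0 < β) (hβπ : β < Real.pi) :
    AnalyticOnNhd ℂ (mufun k R β) (cutPlane R β) ∧
    ∀ s : ℝ, 0 < s →
      (mufun k R β s) ^ 2 = k * ((s : ℂ) * Real.cos β - R + rfun R β s) ∧
      (mufun k R β s).im = 0 ∧ 0 < (mufun k R β s).re := by
  have hsn : 0 < Real.sin β := Real.sin_pos_of_pos_of_lt_pi hβ0 hβπ
  have pyth : Real.sin β ^ 2 + Real.cos β ^ 2 = 1 := Real.sin_sq_add_cos_sq β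
  constructor
  · intro s hs
    have hQ := Qslit hR hβ0 hβπ hs
    have hWs := Wre_pos hR hβ0 hβπ hs
    have h1 : AnalyticAt ℂ (fun z : ℂ => (R : ℂ) ^ 2 + z ^ 2 - 2 * z * R * Real.cos β) s := by
      exact (analyticAt_const.add ((analyticAt_id).pow 2)).sub
        (((analyticAt_const.mul analyticAt_id).mul analyticAt_const).mul analyticAt_const)
    have h2 : AnalyticAt ℂ (rfun R β) s := by
      unfold rfun
      exact h1.cpow analyticAt_const hQ
    have h3 : AnalyticAt ℂ (fun z : ℂ => (R : ℂ) - z * Real.cos β + rfun R β z) s :=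
      (analyticAt_const.sub (analyticAt_id.mul analyticAt_const)).add h2
    have hWne : (R : ℂ) - s * Real.cos β + rfun R β s ≠ 0 := by
      intro h
      rw [h] at hWs
      simp at hWs
    have h4 : AnalyticAt ℂ
        (fun z : ℂ => ((R : ℂ) - z * Real.cos β + rfun R β z) ^ ((1 : ℂ) / 2)) s :=
      h3.cpow analyticAt_const (Complex.mem_slitPlane_iff.mpr (Or.inl hWs))
    have h5 : AnalyticAt ℂ (fun z : ℂ => (Real.sqrt k : ℂ) * z * Real.sin β) s :=
      (analyticAt_const.mul analyticAt_id).mul analyticAt_const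
    have hden : ((R : ℂ) - s * Real.cos β + rfun R β s) ^ ((1 : ℂ) / 2) ≠ 0 := by
      rw [Ne, Complex.cpow_eq_zero_iff]
      exact fun h => hWne h.1
    unfold mufun
    exact h5.div h4 hden
  · intro s hs
    set c := Real.cos β with hc
    set sn := Real.sin β with hsn'
    set q : ℝ := R ^ 2 + s ^ 2 - 2 * s * R * c with hqdef
    have hq : 0 < q := by
      have : q = (s - R * c) ^ 2 + R ^ 2 * sn ^ 2 := by
        rw [hqdef]; linear_combination (-R^2) * pyth
      rw [this]
      have : 0 < R ^ 2 * sn ^ 2 := by positivity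
      nlinarith [sq_nonneg (s - R * c)]
    have hQcast : (R : ℂ) ^ 2 + (s : ℂ) ^ 2 - 2 * (s : ℂ) * (R : ℂ) * (c : ℂ) = ((q : ℝ) : ℂ) := by
      rw [hqdef]; push_cast; ring
    have hrfun : rfun R β (s : ℂ) = (Real.sqrt q : ℂ) := by
      unfold rfun
      rw [← hc, hQcast, ofReal_half hq.le]
    set r : ℝ := Real.sqrt q with hrdef
    have hr0 : 0 < r := Real.sqrt_pos.mpr hq
    have hr2 : r ^ 2 = q := Real.sq_sqrt hq.le
    set w : ℝ := R - s * c + r with hwdef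
    have hw : 0 < w := by
      have hkey : r ^ 2 - (s * c - R) ^ 2 = s ^ 2 * sn ^ 2 := by
        rw [hr2, hqdef]; linear_combination (-s^2) * pyth
      nlinarith [hkey, hr0, mul_pos (mul_pos hs hs) (mul_pos hsn hsn),
        sq_nonneg (r + (s * c - R))]
    have hWcast : (R : ℂ) - (s : ℂ) * (c : ℂ) + (r : ℝ) = ((w : ℝ) : ℂ) := by
      rw [hwdef]; push_cast; ring
    have hmu : mufun k R β s = ((Real.sqrt k * s * sn / Real.sqrt w : ℝ) : ℂ) := by
      unfold mufun
      rw [← hc, ← hsn', hrfun, hWcast, ofReal_half hw.le]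
      push_cast
      ring
    refine ⟨?_, ?_, ?_⟩
    · rw [hmu, hrfun]
      rw [← Complex.ofReal_pow,
        show (k : ℂ) * ((s : ℂ) * (c : ℂ) - (R : ℂ) + ((r : ℝ) : ℂ))
            = ((k * (s * c - R + r) : ℝ) : ℂ) by push_cast; ring,
        Complex.ofReal_inj]
      rw [div_pow, mul_pow, mul_pow, Real.sq_sqrt hk.le, Real.sq_sqrt hw.le,
        div_eq_iff hw.ne']
      rw [hwdef]
      have hq' : r ^ 2 = q := hr2
      rw [hqdef] at hq'
      linear_combination (-k) * hq' + (k * s ^ 2) * pyth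
    · rw [hmu]; exact Complex.ofReal_im _
    · rw [hmu, Complex.ofReal_re]
      exact div_pos (mul_pos (mul_pos (Real.sqrt_pos.mpr hk) hs) hsn) (Real.sqrt_pos.mpr hw)
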